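/- Suppose generator i has w_i = 0 and let ε_i > 0. Let (u*, x*) ∈ G_i with x_i^c,min ≤ x* ≤ x_i^c,max (in particular, (u*,x*) may be the i-th component of any primal minimizer). Then (u*, x*) maximizes (u,x) ↦ p·x − C_i(u,x) over G_i if and only if it maximizes the same function over G̃_i(ε_i). -/
import Mathlib


noncomputable section

/-- Feasible set of a single generator with capacity `xmax`. -/
def Gen (xmax : ℝ) : Set (ℝ × ℝ) :=
  {ux | (ux.1 = 0 ∨ ux.1 = 1) ∧ 0 ≤ ux.2 ∧ ux.2 ≤ ux.1 * xmax}

/-- Cost of a generator. -/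
def Cost (w : ℝ) (c : ℝ → ℝ) (ux : ℝ × ℝ) : ℝ := w * ux.1 + c ux.2

/-- Lower bound `x^c,min` of possible output volumes of generator `i`. -/
def xcmin (n : ℕ) (xmax : Fin n → ℝ) (d : ℝ) (i : Fin n) : ℝ :=
  max (d - ∑ j ∈ Finset.univ.erase i, xmax j) 0

/-- Upper bound `x^c,max` of possible output volumes of generator `i`. -/
def xcmax (n : ℕ) (xmax : Fin n → ℝ) (d : ℝ) (i : Fin n) : ℝ :=
  min d (xmax i)

/-- The modified feasible set `G̃_i(ε)`. -/
def Gtilde (xmax xcmin xcmax ε : ℝ) : Set (ℝ × ℝ) :=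
  {((0 : ℝ), (0 : ℝ))} ∪
    {ux | ux.1 = 1 ∧ max (xcmin - ε) 0 ≤ ux.2 ∧ ux.2 ≤ min (xcmax + ε) xmax}

/-- Proposition 3: for a generator `i` with zero start-up cost and any `ε > 0`,
a point `(u*,x*) ∈ G_i` with `x^c,min ≤ x* ≤ x^c,max` maximizes the profit
`p·x − C_i(u,x)` over `G_i` iff it maximizes it over `G̃_i(ε)`. -/
theorem stmt_2 (n : ℕ) (d : ℝ) (hd : 0 < d)
    (w xmax : Fin n → ℝ) (c : Fin n → ℝ → ℝ)
    (hxmax : ∀ i, 0 < xmax i) (hw : ∀ i, 0 ≤ w i)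
    (hconv : ∀ i, ConvexOn ℝ (Set.Icc 0 (xmax i)) (c i))
    (hmono : ∀ i, MonotoneOn (c i) (Set.Icc 0 (xmax i)))
    (hcont : ∀ i, ContinuousOn (c i) (Set.Icc 0 (xmax i)))
    (hc0 : ∀ i, c i 0 = 0)
    (hfeas : d ≤ ∑ i, xmax i)
    (i : Fin n) (hwi : w i = 0) (ε : ℝ) (hε : 0 < ε) (p : ℝ)
    (us xs : ℝ) (hmem : (us, xs) ∈ Gen (xmax i))
    (hlo : xcmin n xmax d i ≤ xs) (hhi : xs ≤ xcmax n xmax d i) :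
    IsMaxOn (fun ux => p * ux.2 - Cost (w i) (c i) ux) (Gen (xmax i)) (us, xs)
    ↔ ((us, xs) ∈ Gtilde (xmax i) (xcmin n xmax d i) (xcmax n xmax d i) ε ∧
        IsMaxOn (fun ux => p * ux.2 - Cost (w i) (c i) ux)
          (Gtilde (xmax i) (xcmin n xmax d i) (xcmax n xmax d i) ε) (us, xs)) := by
  set A := xcmin n xmax d i with hA
  set B := xcmax n xmax d i with hB
  obtain ⟨hus, hxs0, hxsle⟩ := hmem
  simp only at hus hxs0 hxsle
  have hxsmax : xs ≤ xmax i := by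
    rcases hus with h | h
    · rw [h, zero_mul] at hxsle; linarith [(hxmax i).le]
    · rw [h, one_mul] at hxsle; exact hxsle
  -- membership in Gtilde
  have hmemT : (us, xs) ∈ Gtilde (xmax i) A B ε := by
    rcases hus with h | h
    · left
      have hxs : xs = 0 := le_antisymm (by rw [h, zero_mul] at hxsle; exact hxsle) hxs0
      simp [h, hxs]
    · right
      exact ⟨h, max_le (by linarith) hxs0, le_min (by linarith) hxsmax⟩
  -- Gtilde ⊆ Gen
  have hsub : Gtilde (xmax i) A B ε ⊆ Gen (xmax i) := by
    rintro ⟨u, x⟩ (h | ⟨h1, h2, h3⟩)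
    · simp only [Set.mem_singleton_iff, Prod.mk.injEq] at h
      exact ⟨Or.inl h.1, le_of_eq h.2.symm, by simp [h.1, h.2]⟩
    · exact ⟨Or.inr h1, le_trans (le_max_right _ _) h2,
        by rw [show u = 1 from h1, one_mul]; exact le_trans h3 (min_le_right _ _)⟩
  -- the profit function only depends on x
  set g : ℝ → ℝ := fun x => c i x - p * x with hg
  have hfun : (fun ux : ℝ × ℝ => p * ux.2 - Cost (w i) (c i) ux)
      = fun ux => -(g ux.2) := by
    funext ux; simp only [Cost, hwi, hg]; ring
  rw [hfun, isMaxOn_iff, isMaxOn_iff]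
  have hgconv : ConvexOn ℝ (Set.Icc 0 (xmax i)) g := by
    refine ⟨convex_Icc _ _, fun x hx y hy a b ha hb hab => ?_⟩
    have h1 := (hconv i).2 hx hy ha hb hab
    simp only [smul_eq_mul, hg] at h1 ⊢
    have hp : p * (a * x + b * y) = a * (p * x) + b * (p * y) := by ring
    linarith
  constructor
  · intro hmax
    exact ⟨hmemT, fun y hy => hmax y (hsub hy)⟩
  · rintro ⟨-, hmax⟩
    -- g xs ≤ g y for all y in [max (A-ε) 0, min (B+ε) xmax]
    have key : ∀ y, max (A - ε) 0 ≤ y → y ≤ min (B + ε) (xmax i) → g xs ≤ g y := by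
      intro y h1 h2
      have := hmax ((1 : ℝ), y) (Or.inr ⟨rfl, h1, h2⟩)
      simp only at this
      linarith
    rintro ⟨u, x⟩ ⟨huz, hx0, hzle⟩
    simp only at huz hx0 hzle ⊢
    have hxmaxle : x ≤ xmax i := by
      rcases huz with h | h
      · rw [h, zero_mul] at hzle; linarith [(hxmax i).le]
      · rw [h, one_mul] at hzle; exact hzle
    have hxsIcc : xs ∈ Set.Icc (0:ℝ) (xmax i) := ⟨hxs0, hxsmax⟩
    have hxIcc : x ∈ Set.Icc (0:ℝ) (xmax i) := ⟨hx0, hxmaxle⟩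
    have hA0 : (0:ℝ) ≤ A := le_max_right _ _
    have hAmax : A ≤ xmax i := le_trans hlo hxsmax
    suffices h : g xs ≤ g x by linarith
    by_cases hcase1 : x < max (A - ε) 0
    · -- x lies to the left of the modified interval
      have ha0 : 0 < max (A - ε) 0 := lt_of_le_of_lt hx0 hcase1
      have haA : max (A - ε) 0 = A - ε := by
        rcases max_cases (A - ε) (0:ℝ) with ⟨h1, _⟩ | ⟨h1, _⟩
        · exact h1
        · rw [h1] at ha0; exact absurd ha0 (lt_irrefl 0)
      rw [haA] at hcase1
      have haxs : A - ε < xs := by linarith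
      have hseg : A - ε ∈ openSegment ℝ x xs := by
        rw [openSegment_eq_Ioo (by linarith : x < xs)]
        exact ⟨hcase1, haxs⟩
      have hga : g xs ≤ g (A - ε) :=
        key _ haA.le (le_min (by linarith) (by linarith))
      have := hgconv.le_left_of_right_le hxIcc hxsIcc hseg hga
      linarith
    · push_neg at hcase1
      by_cases hcase2 : min (B + ε) (xmax i) < x
      · -- x lies to the right of the modified interval
        have hbB : min (B + ε) (xmax i) = B + ε := by
          rcases min_cases (B + ε) (xmax i) with ⟨h1, _⟩ | ⟨h1, _⟩
          · exact h1
          · rw [h1] at hcase2; exact absurd hxmaxle (not_le.mpr hcase2)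
        rw [hbB] at hcase2
        have hBmax : B + ε ≤ xmax i := by
          by_contra hcon
          push_neg at hcon
          rw [min_eq_right hcon.le] at hbB
          linarith
        have hb : xs < B + ε := by linarith
        have hseg : B + ε ∈ openSegment ℝ xs x := by
          rw [openSegment_eq_Ioo (by linarith : xs < x)]
          exact ⟨hb, hcase2⟩
        have hga : g xs ≤ g (B + ε) :=
          key _ (max_le (by linarith) (by linarith)) (le_min le_rfl hBmax)
        have := hgconv.le_right_of_left_le hxsIcc hxIcc hseg hga
        linarith
      · push_neg at hcase2
        exact key x hcase1 hcase2
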